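/- For 0 < α < 1 and all x, y ≥ 0, the Mittag-Leffler function satisfies E_α((x+y)^α) ≤ E_α(x^α) · E_α(y^α). -/

import Mathlib

open MeasureTheory Filter Set intervalIntegral Topology Nat

noncomputable def mittagLeffler (α x : ℝ) : ℝ :=
  ∑' k : ℕ, x ^ k / Real.Gamma (α * k + 1)

namespace MLAux

/-- `F α t = E_α(t^α)`. -/
noncomputable def F (α t : ℝ) : ℝ := mittagLeffler α (t ^ α)

/-- Partial sums of the series defining `F`. -/
noncomputable def S (α : ℝ) (n : ℕ) (t : ℝ) : ℝ :=
  ∑ k ∈ Finset.range n, (t ^ α) ^ k / Real.Gamma (α * k + 1)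

variable {α : ℝ}

lemma gamma_pos (hα0 : 0 < α) (k : ℕ) : 0 < Real.Gamma (α * k + 1) :=
  Real.Gamma_pos_of_pos (by positivity)

lemma summable_ML (hα0 : 0 < α) {w : ℝ} (hw : 0 ≤ w) :
    Summable (fun k : ℕ => w ^ k / Real.Gamma (α * k + 1)) := by
  set R : ℝ := 2 * w + 2 with hR
  have hR2 : (2:ℝ) ≤ R := by linarith
  have hR0 : (0:ℝ) < R := by linarith
  set Q : ℝ := R ^ (α⁻¹ : ℝ) with hQ
  have hQ1 : (1:ℝ) ≤ Q := Real.one_le_rpow (by linarith) (by positivity)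
  have hQα : Q ^ α = R := by
    rw [hQ, ← Real.rpow_mul hR0.le, inv_mul_cancel₀ hα0.ne', Real.rpow_one]
  -- eventually n ! ≥ Q ^ (n+1)
  have htend : Tendsto (fun n : ℕ => Q ^ n / n !) atTop (𝓝 0) :=
    FloorSemiring.tendsto_pow_div_factorial_atTop Q
  have hev : ∀ᶠ n : ℕ in atTop, Q ^ (n + 1) ≤ n ! := by
    filter_upwards [htend.eventually (gt_mem_nhds (show (0:ℝ) < Q⁻¹ by positivity))] with n hn
    have hfac : (0:ℝ) < n ! := by positivity
    rw [div_lt_iff₀ hfac] at hn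
    calc Q ^ (n+1) = Q ^ n * Q := by ring
      _ ≤ (Q⁻¹ * n !) * Q := by
          have h0 : (0:ℝ) < Q := by linarith
          nlinarith [pow_nonneg h0.le n]
      _ = n ! * (Q⁻¹ * Q) := by ring
      _ = n ! := by
          rw [inv_mul_cancel₀ (by linarith : Q ≠ 0), mul_one]
  obtain ⟨N, hN⟩ := eventually_atTop.mp hev
  -- floor of α k tends to infinity
  have hfl : Tendsto (fun k : ℕ => ⌊α * (k:ℝ)⌋₊) atTop atTop := by
    apply tendsto_nat_floor_atTop.comp
    exact Tendsto.const_mul_atTop hα0 tendsto_natCast_atTop_atTop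
  have hev2 : ∀ᶠ k : ℕ in atTop, w ^ k / Real.Gamma (α * k + 1) ≤ (2:ℝ)⁻¹ ^ k := by
    filter_upwards [hfl.eventually_ge_atTop (max N 1)] with k hk
    set n : ℕ := ⌊α * (k:ℝ)⌋₊ with hn
    have hn1 : 1 ≤ n := le_trans (le_max_right N 1) hk
    have hnN : N ≤ n := le_trans (le_max_left N 1) hk
    have hαk0 : (0:ℝ) ≤ α * k := by positivity
    have hfloor_le : (n:ℝ) ≤ α * k := Nat.floor_le hαk0
    have hlt : α * (k:ℝ) < n + 1 := Nat.lt_floor_add_one _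
    -- R ^ k ≤ Γ(α k + 1)
    have key : R ^ k ≤ Real.Gamma (α * k + 1) := by
      have h1 : (R:ℝ) ^ k ≤ Q ^ ((n:ℝ) + 1) := by
        rw [← hQα, ← Real.rpow_natCast (Q ^ α) k, ← Real.rpow_mul (by linarith : (0:ℝ) ≤ Q)]
        exact Real.rpow_le_rpow_of_exponent_le hQ1 (by push_cast; linarith)
      have h2 : Q ^ ((n:ℝ) + 1) ≤ (n ! : ℝ) := by
        rw [show ((n:ℝ) + 1) = ((n + 1 : ℕ) : ℝ) by push_cast; ring, Real.rpow_natCast]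
        exact hN n hnN
      have h3 : (n ! : ℝ) ≤ Real.Gamma (α * k + 1) := by
        rw [← Real.Gamma_nat_eq_factorial]
        have hmono := Real.Gamma_strictMonoOn_Ici.monotoneOn
        apply hmono
        · simp only [mem_Ici]; push_cast; linarith [(Nat.one_le_cast (α := ℝ)).mpr hn1]
        · simp only [mem_Ici]
          have : (1:ℝ) ≤ n := Nat.one_le_cast.mpr hn1
          linarith
        · linarith
      linarith
    have hΓpos := gamma_pos hα0 k
    have hRk : (0:ℝ) < R ^ k := by positivity
    calc w ^ k / Real.Gamma (α * k + 1) ≤ w ^ k / R ^ k := by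
          exact div_le_div_of_nonneg_left (by positivity) hRk key
      _ = (w / R) ^ k := by rw [div_pow]
      _ ≤ (2:ℝ)⁻¹ ^ k := by
          apply pow_le_pow_left₀ (by positivity)
          rw [div_le_iff₀ hR0]
          linarith
  obtain ⟨K, hK⟩ := eventually_atTop.mp hev2
  rw [← summable_nat_add_iff K]
  refine Summable.of_nonneg_of_le (f := fun k => (2:ℝ)⁻¹ ^ (k + K)) (fun k => ?_)
    (fun k => hK (k + K) (by omega)) ?_
  · have := gamma_pos hα0 (k + K)
    positivity
  · simp_rw [pow_add]
    exact (summable_geometric_of_lt_one (by norm_num) (by norm_num)).mul_right _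

lemma F_eq (t : ℝ) : F α t = ∑' k : ℕ, (t ^ α) ^ k / Real.Gamma (α * k + 1) := rfl

lemma S_tendsto (hα0 : 0 < α) {t : ℝ} (ht : 0 ≤ t) :
    Tendsto (fun n => S α n t) atTop (𝓝 (F α t)) :=
  ((summable_ML hα0 (Real.rpow_nonneg ht α)).hasSum).tendsto_sum_nat

lemma S_nonneg (hα0 : 0 < α) (n : ℕ) {t : ℝ} (ht : 0 ≤ t) : 0 ≤ S α n t := by
  apply Finset.sum_nonneg
  intro k _
  have := gamma_pos hα0 k
  positivity

lemma S_mono (hα0 : 0 < α) (n : ℕ) {t t' : ℝ} (ht : 0 ≤ t) (htt' : t ≤ t') :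
    S α n t ≤ S α n t' := by
  apply Finset.sum_le_sum
  intro k _
  have h1 : t ^ α ≤ t' ^ α := Real.rpow_le_rpow ht htt' hα0.le
  have h2 : (0:ℝ) ≤ t ^ α := Real.rpow_nonneg ht α
  have := gamma_pos hα0 k
  gcongr

lemma S_le_F (hα0 : 0 < α) (n : ℕ) {t : ℝ} (ht : 0 ≤ t) : S α n t ≤ F α t := by
  apply Summable.sum_le_tsum
  · intro k _
    have := gamma_pos hα0 k
    have h2 : (0:ℝ) ≤ t ^ α := Real.rpow_nonneg ht α
    positivity
  · exact summable_ML hα0 (Real.rpow_nonneg ht α)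

lemma one_le_F (hα0 : 0 < α) {t : ℝ} (ht : 0 ≤ t) : 1 ≤ F α t := by
  have h := Summable.le_tsum (summable_ML hα0 (Real.rpow_nonneg ht α)) 0 (fun k _ => by
    have := gamma_pos hα0 k
    have h2 : (0:ℝ) ≤ t ^ α := Real.rpow_nonneg ht α
    positivity)
  simpa [Real.Gamma_one, F_eq] using h

lemma F_nonneg (hα0 : 0 < α) {t : ℝ} (ht : 0 ≤ t) : 0 ≤ F α t :=
  le_trans zero_le_one (one_le_F hα0 ht)

lemma F_mono (hα0 : 0 < α) {t t' : ℝ} (ht : 0 ≤ t) (htt' : t ≤ t') : F α t ≤ F α t' := by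
  apply Summable.tsum_le_tsum _ (summable_ML hα0 (Real.rpow_nonneg ht α))
      (summable_ML hα0 (Real.rpow_nonneg (ht.trans htt') α))
  intro k
  have h1 : t ^ α ≤ t' ^ α := Real.rpow_le_rpow ht htt' hα0.le
  have h2 : (0:ℝ) ≤ t ^ α := Real.rpow_nonneg ht α
  have := gamma_pos hα0 k
  gcongr

lemma beta_real {p q : ℝ} (hp : 0 < p) (hq : 0 < q) :
    ∫ x in (0:ℝ)..1, x ^ (p-1) * (1-x) ^ (q-1)
      = Real.Gamma p * Real.Gamma q / Real.Gamma (p+q) := by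
  have h := Complex.Gamma_mul_Gamma_eq_betaIntegral (s := (p:ℂ)) (t := (q:ℂ))
    (by simpa using hp) (by simpa using hq)
  have hb : Complex.betaIntegral (p:ℂ) (q:ℂ)
      = ((∫ x in (0:ℝ)..1, x ^ (p-1) * (1-x) ^ (q-1) : ℝ) : ℂ) := by
    rw [Complex.betaIntegral, ← intervalIntegral.integral_ofReal]
    apply intervalIntegral.integral_congr
    intro x hx
    have hx' : x ∈ Icc (0:ℝ) 1 := by rwa [uIcc_of_le (by norm_num : (0:ℝ) ≤ 1)] at hx
    show (x:ℂ) ^ ((p:ℂ)-1) * (1-(x:ℂ)) ^ ((q:ℂ)-1) = ((x ^ (p-1) * (1-x) ^ (q-1) : ℝ) : ℂ)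
    rw [Complex.ofReal_mul, Complex.ofReal_cpow hx'.1,
      Complex.ofReal_cpow (by linarith [hx'.2] : (0:ℝ) ≤ 1 - x)]
    push_cast
    ring
  have hΓ : (Real.Gamma (p+q) : ℂ) ≠ 0 := by
    simp only [ne_eq, Complex.ofReal_eq_zero]
    exact (Real.Gamma_pos_of_pos (by linarith)).ne'
  rw [hb, Complex.Gamma_ofReal, Complex.Gamma_ofReal, ← Complex.ofReal_add,
    Complex.Gamma_ofReal] at h
  have := h.symm
  rw [mul_comm] at this
  -- this : ↑(real integral) * ↑Γ(p+q) = ↑Γp * ↑Γq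
  have h2 : (((∫ x in (0:ℝ)..1, x ^ (p-1) * (1-x) ^ (q-1)) * Real.Gamma (p+q) : ℝ) : ℂ)
      = ((Real.Gamma p * Real.Gamma q : ℝ) : ℂ) := by push_cast; rw [this]
  have h3 := Complex.ofReal_inj.mp h2
  have hΓR : Real.Gamma (p+q) ≠ 0 := (Real.Gamma_pos_of_pos (by linarith)).ne'
  field_simp
  linarith [h3]

lemma beta_scaled {T : ℝ} (hT : 0 < T) {p q : ℝ} (hp : 0 < p) (hq : 0 < q) :
    ∫ u in (0:ℝ)..T, (T-u) ^ (p-1) * u ^ (q-1)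
      = Real.Gamma p * Real.Gamma q / Real.Gamma (p+q) * T ^ (p+q-1) := by
  have hsub := intervalIntegral.mul_integral_comp_mul_left
    (a := (0:ℝ)) (b := 1) (f := fun u => (T-u) ^ (p-1) * u ^ (q-1)) (c := T)
  rw [mul_zero, mul_one] at hsub
  rw [← hsub]
  have hcong : ∀ x ∈ uIcc (0:ℝ) 1,
      (T - T*x) ^ (p-1) * (T*x) ^ (q-1)
        = (T ^ (p-1) * T ^ (q-1)) * (x ^ (q-1) * (1-x) ^ (p-1)) := by
    intro x hx
    have hx' : x ∈ Icc (0:ℝ) 1 := by rwa [uIcc_of_le (by norm_num : (0:ℝ) ≤ 1)] at hx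
    have h1 : T - T*x = T * (1-x) := by ring
    rw [h1, Real.mul_rpow hT.le (by linarith [hx'.2]), Real.mul_rpow hT.le hx'.1]
    ring
  rw [intervalIntegral.integral_congr hcong, intervalIntegral.integral_const_mul,
    beta_real hq hp]
  have hpow : T * (T ^ (p-1) * T ^ (q-1)) = T ^ (p+q-1) := by
    nth_rewrite 1 [← Real.rpow_one T]
    rw [← Real.rpow_add hT, ← Real.rpow_add hT]
    congr 1
    ring
  rw [show T * (T ^ (p-1) * T ^ (q-1) * (Real.Gamma q * Real.Gamma p / Real.Gamma (q+p)))
      = (T * (T ^ (p-1) * T ^ (q-1))) * (Real.Gamma q * Real.Gamma p / Real.Gamma (q+p))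
    from by ring, hpow, add_comm q p]
  ring

lemma kernel_aesm {T c : ℝ} (hTc : T ≤ c) :
    AEStronglyMeasurable (fun u : ℝ => (c - u) ^ (α-1)) (volume.restrict (Ioc 0 T)) := by
  rw [← Measure.restrict_congr_set Ioo_ae_eq_Ioc]
  refine ContinuousOn.aestronglyMeasurable ?_ measurableSet_Ioo
  apply ContinuousOn.rpow_const ((continuous_const.sub continuous_id).continuousOn)
  intro u hu
  exact Or.inl (by
    have h2 := hu.2
    simp only [Pi.sub_apply, id_eq]
    intro h
    nlinarith [sub_eq_zero.mp h])

lemma intervalIntegrable_kernel (hα0 : 0 < α) (hα1 : α < 1) {T c M : ℝ} (hT : 0 < T) (hTc : T ≤ c)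
    {g : ℝ → ℝ} (hg : AEStronglyMeasurable g (volume.restrict (Ioc 0 T)))
    (hgb : ∀ u ∈ Ioc (0:ℝ) T, |g u| ≤ M) :
    IntervalIntegrable (fun u => (c - u) ^ (α-1) * g u) volume 0 T := by
  have hM : 0 ≤ M := le_trans (abs_nonneg _) (hgb T ⟨hT, le_rfl⟩)
  have hker : IntervalIntegrable (fun u : ℝ => (T - u) ^ (α-1)) volume 0 T := by
    have h1 : IntervalIntegrable (fun x : ℝ => x ^ (α-1)) volume 0 T :=
      intervalIntegral.intervalIntegrable_rpow' (by linarith)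
    have h2 := (h1.comp_sub_left T).symm
    simpa using h2
  rw [intervalIntegrable_iff_integrableOn_Ioc_of_le hT.le] at hker ⊢
  have hbound : IntegrableOn (fun u : ℝ => (T - u) ^ (α-1) * M) (Ioc 0 T) volume :=
    hker.mul_const M
  apply Integrable.mono hbound ((kernel_aesm hTc).mul hg)
  have hne : ∀ᵐ u ∂(volume.restrict (Ioc (0:ℝ) T)), u ≠ T := by
    rw [ae_iff]
    simp only [ne_eq, not_not, setOf_eq_eq_singleton]
    exact le_antisymm (le_trans (Measure.restrict_apply_le _ _) (by simp)) (_root_.zero_le)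
  filter_upwards [ae_restrict_mem measurableSet_Ioc, hne,
    ae_restrict_iff' measurableSet_Ioc |>.mpr
      (Eventually.of_forall (fun u (hu : u ∈ Ioc (0:ℝ) T) => hgb u hu))] with u hu huT hgu
  have hu1 : 0 < u := hu.1
  have hu2 : u < T := lt_of_le_of_ne hu.2 huT
  have hc : (0:ℝ) ≤ c - u := by linarith
  have hT' : (0:ℝ) ≤ T - u := by linarith
  have hkk : (c - u) ^ (α-1) ≤ (T - u) ^ (α-1) :=
    Real.rpow_le_rpow_of_nonpos (by linarith) (by linarith) (by linarith)
  have h4 : (0:ℝ) ≤ (c-u) ^ (α-1) := Real.rpow_nonneg hc _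
  have h5 : (0:ℝ) ≤ (T-u) ^ (α-1) := Real.rpow_nonneg hT' _
  simp only [Pi.mul_apply, Real.norm_eq_abs]
  rw [abs_mul, abs_mul, abs_of_nonneg h4, abs_of_nonneg h5, abs_of_nonneg hM]
  calc (c-u) ^ (α-1) * |g u| ≤ (T-u) ^ (α-1) * |g u| := by gcongr
    _ ≤ (T-u) ^ (α-1) * M := by gcongr

lemma S_continuous (hα0 : 0 < α) (n : ℕ) : Continuous (S α n) := by
  apply continuous_finset_sum
  intro k _
  exact (((Real.continuous_rpow_const hα0.le).pow k).div_const _)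

lemma F_aesm (hα0 : 0 < α) {T : ℝ} :
    AEStronglyMeasurable (F α) (volume.restrict (Ioc 0 T)) := by
  refine aestronglyMeasurable_of_tendsto_ae atTop
    (fun n => (S_continuous hα0 n).aestronglyMeasurable) ?_
  filter_upwards [ae_restrict_mem measurableSet_Ioc] with u hu
  exact S_tendsto hα0 hu.1.le

lemma S_rec (hα0 : 0 < α) (hα1 : α < 1) {T : ℝ} (hT : 0 < T) (n : ℕ) :
    S α (n+1) T = 1 + (Real.Gamma α)⁻¹ * ∫ u in (0:ℝ)..T, (T-u) ^ (α-1) * S α n u := by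
  have hΓα := Real.Gamma_pos_of_pos hα0
  have hint : ∀ k : ℕ, IntervalIntegrable
      (fun u => (T-u) ^ (α-1) * ((u ^ α) ^ k / Real.Gamma (α*k+1))) volume 0 T := by
    intro k
    apply intervalIntegrable_kernel hα0 hα1 hT le_rfl
      (M := (T ^ α) ^ k / Real.Gamma (α*k+1))
    · exact (((Real.continuous_rpow_const hα0.le).pow k).div_const _).aestronglyMeasurable.restrict
    · intro u hu
      have h1 : (0:ℝ) ≤ u ^ α := Real.rpow_nonneg hu.1.le _
      have h2 : u ^ α ≤ T ^ α := Real.rpow_le_rpow hu.1.le hu.2 hα0.le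
      have := gamma_pos hα0 k
      rw [abs_of_nonneg (by positivity)]
      gcongr
  have hsplit : (fun u => (T-u) ^ (α-1) * S α n u)
      = fun u => ∑ k ∈ Finset.range n, (T-u) ^ (α-1) * ((u ^ α) ^ k / Real.Gamma (α*k+1)) := by
    funext u; rw [S, Finset.mul_sum]
  rw [hsplit, intervalIntegral.integral_finset_sum (fun k _ => hint k)]
  have hterm : ∀ k : ℕ, (∫ u in (0:ℝ)..T, (T-u) ^ (α-1) * ((u ^ α) ^ k / Real.Gamma (α*k+1)))
      = Real.Gamma α * ((T ^ α) ^ (k+1) / Real.Gamma (α*((k+1:ℕ):ℝ)+1)) := by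
    intro k
    have hcong : ∀ u ∈ uIcc (0:ℝ) T, (T-u) ^ (α-1) * ((u ^ α) ^ k / Real.Gamma (α*k+1))
        = ((T-u) ^ (α-1) * u ^ (α*(k:ℝ)+1-1)) * (Real.Gamma (α*k+1))⁻¹ := by
      intro u hu
      have hu' : (0:ℝ) ≤ u := by
        rw [uIcc_of_le hT.le] at hu
        exact hu.1
      rw [show α*(k:ℝ)+1-1 = α*(k:ℝ) by ring, Real.rpow_mul hu', Real.rpow_natCast]
      ring
    rw [intervalIntegral.integral_congr hcong, intervalIntegral.integral_mul_const,
      beta_scaled hT hα0 (by positivity : (0:ℝ) < α*(k:ℝ)+1)]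
    have e1 : α + (α*(k:ℝ)+1) = α*((k+1:ℕ):ℝ)+1 := by push_cast; ring
    rw [e1]
    have e2 : T ^ (α*((k+1:ℕ):ℝ)+1-1) = (T ^ α) ^ (k+1) := by
      rw [show α*((k+1:ℕ):ℝ)+1-1 = α*((k+1:ℕ):ℝ) by ring, Real.rpow_mul hT.le,
        Real.rpow_natCast]
    rw [e2]
    have hc1 := gamma_pos hα0 k
    have hc2 := gamma_pos hα0 (k+1)
    have hc2' : Real.Gamma (α*((k+1:ℕ):ℝ)+1) ≠ 0 := hc2.ne'
    field_simp
  rw [Finset.sum_congr rfl (fun k _ => hterm k), ← Finset.mul_sum, ← mul_assoc,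
    inv_mul_cancel₀ hΓα.ne', one_mul]
  rw [S, Finset.sum_range_succ']
  have h0 : (T ^ α) ^ (0:ℕ) / Real.Gamma (α*((0:ℕ):ℝ)+1) = 1 := by
    simp [Real.Gamma_one]
  rw [h0]
  ring

lemma integral_F_le (hα0 : 0 < α) (hα1 : α < 1) {s : ℝ} (hs : 0 < s) :
    ∫ v in (0:ℝ)..s, (s-v) ^ (α-1) * F α v ≤ Real.Gamma α * (F α s - 1) := by
  have hΓα := Real.Gamma_pos_of_pos hα0
  have hIoc : Set.uIoc (0:ℝ) s = Ioc 0 s := uIoc_of_le hs.le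
  have htend : Tendsto (fun n => ∫ v in (0:ℝ)..s, (s-v) ^ (α-1) * S α n v) atTop
      (𝓝 (∫ v in (0:ℝ)..s, (s-v) ^ (α-1) * F α v)) := by
    apply intervalIntegral.tendsto_integral_filter_of_dominated_convergence
      (bound := fun v => (s-v) ^ (α-1) * F α s)
    · refine Eventually.of_forall fun n => ?_
      rw [hIoc]
      exact (kernel_aesm le_rfl).mul (S_continuous hα0 n).aestronglyMeasurable.restrict
    · refine Eventually.of_forall fun n => Eventually.of_forall fun v hv => ?_
      rw [hIoc] at hv
      have h0v : 0 < v := hv.1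
      have hvs : v ≤ s := hv.2
      have hker : (0:ℝ) ≤ (s-v) ^ (α-1) := Real.rpow_nonneg (by linarith) _
      have hSn : 0 ≤ S α n v := S_nonneg hα0 n h0v.le
      rw [Real.norm_eq_abs, abs_mul, abs_of_nonneg hker, abs_of_nonneg hSn]
      have hle : S α n v ≤ F α s := le_trans (S_le_F hα0 n h0v.le) (F_mono hα0 h0v.le hvs)
      gcongr
    · exact intervalIntegrable_kernel hα0 hα1 hs le_rfl (M := F α s)
        aestronglyMeasurable_const
        (fun u _ => by rw [abs_of_nonneg (F_nonneg hα0 hs.le)])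
    · refine Eventually.of_forall fun v hv => ?_
      rw [hIoc] at hv
      exact Tendsto.const_mul _ (S_tendsto hα0 hv.1.le)
  refine le_of_tendsto htend (Eventually.of_forall fun n => ?_)
  have hrec := S_rec hα0 hα1 hs n
  have hSF := S_le_F hα0 (n+1) hs.le
  have key : (Real.Gamma α)⁻¹ * (∫ v in (0:ℝ)..s, (s-v) ^ (α-1) * S α n v)
      = S α (n+1) s - 1 := by linarith
  have h2 : (∫ v in (0:ℝ)..s, (s-v) ^ (α-1) * S α n v)
      = Real.Gamma α * (S α (n+1) s - 1) := by
    rw [← key, ← mul_assoc, mul_inv_cancel₀ hΓα.ne', one_mul]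
  rw [h2]
  have : S α (n+1) s - 1 ≤ F α s - 1 := by linarith
  exact mul_le_mul_of_nonneg_left this hΓα.le

lemma intervalIntegrable_kernel_F (hα0 : 0 < α) (hα1 : α < 1) {s : ℝ} (hs : 0 < s) :
    IntervalIntegrable (fun v => (s - v) ^ (α-1) * F α v) volume 0 s :=
  intervalIntegrable_kernel hα0 hα1 hs le_rfl (F_aesm hα0)
    (fun v hv => by
      rw [abs_of_nonneg (F_nonneg hα0 hv.1.le)]
      exact F_mono hα0 hv.1.le hv.2)

lemma S_le_mul (hα0 : 0 < α) (hα1 : α < 1) :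
    ∀ n : ℕ, ∀ t s : ℝ, 0 < t → 0 < s → S α n (t+s) ≤ F α t * F α s := by
  intro n
  induction n with
  | zero =>
    intro t s ht hs
    simp only [S, Finset.range_zero, Finset.sum_empty]
    exact mul_nonneg (F_nonneg hα0 ht.le) (F_nonneg hα0 hs.le)
  | succ n ih =>
    intro t s ht hs
    have hts : 0 < t + s := by linarith
    have hΓα := Real.Gamma_pos_of_pos hα0
    rw [S_rec hα0 hα1 hts n]
    have hint1 : IntervalIntegrable (fun u => (t+s-u) ^ (α-1) * S α n u) volume 0 t :=
      intervalIntegrable_kernel hα0 hα1 ht (by linarith) (M := S α n t)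
        (S_continuous hα0 n).aestronglyMeasurable.restrict
        (fun u hu => by
          rw [abs_of_nonneg (S_nonneg hα0 n hu.1.le)]
          exact S_mono hα0 n hu.1.le hu.2)
    have hint1' : IntervalIntegrable (fun u => (t-u) ^ (α-1) * S α n u) volume 0 t :=
      intervalIntegrable_kernel hα0 hα1 ht le_rfl (M := S α n t)
        (S_continuous hα0 n).aestronglyMeasurable.restrict
        (fun u hu => by
          rw [abs_of_nonneg (S_nonneg hα0 n hu.1.le)]
          exact S_mono hα0 n hu.1.le hu.2)
    have hint2' : IntervalIntegrable (fun v => (s-v) ^ (α-1) * S α n (t+v)) volume 0 s :=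
      intervalIntegrable_kernel hα0 hα1 hs le_rfl (M := S α n (t+s))
        ((S_continuous hα0 n).comp (continuous_const.add continuous_id)).aestronglyMeasurable.restrict
        (fun v hv => by
          rw [abs_of_nonneg (S_nonneg hα0 n (by linarith [hv.1] : (0:ℝ) ≤ t + v))]
          exact S_mono hα0 n (by linarith [hv.1]) (by linarith [hv.2]))
    have hint2 : IntervalIntegrable (fun u => (t+s-u) ^ (α-1) * S α n u) volume t (t+s) := by
      have h2 := hint2'.comp_sub_right t
      have heq : (fun x => (fun v => (s-v) ^ (α-1) * S α n (t+v)) (x - t))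
          = fun u => (t+s-u) ^ (α-1) * S α n u := by
        funext u
        simp only
        rw [show s - (u - t) = t + s - u by ring, show t + (u - t) = u by ring]
      rw [heq] at h2
      rw [zero_add, add_comm s t] at h2
      exact h2
    have hsplit := intervalIntegral.integral_add_adjacent_intervals hint1 hint2
    rw [← hsplit]
    -- first piece
    have hA : (∫ u in (0:ℝ)..t, (t+s-u) ^ (α-1) * S α n u)
        ≤ ∫ u in (0:ℝ)..t, (t-u) ^ (α-1) * S α n u := by
      apply intervalIntegral.integral_mono_ae_restrict ht.le hint1 hint1'
      have hne : ∀ᵐ u ∂(volume.restrict (Icc (0:ℝ) t)), u ≠ t := by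
        rw [ae_iff]
        simp only [ne_eq, not_not, setOf_eq_eq_singleton]
        exact le_antisymm (le_trans (Measure.restrict_apply_le _ _) (by simp)) (_root_.zero_le)
      filter_upwards [hne, ae_restrict_mem measurableSet_Icc] with u hut hu
      have h1 : u < t := lt_of_le_of_ne hu.2 hut
      have h0 : (0:ℝ) ≤ u := hu.1
      have hk : (t+s-u) ^ (α-1) ≤ (t-u) ^ (α-1) :=
        Real.rpow_le_rpow_of_nonpos (by linarith) (by linarith) (by linarith)
      exact mul_le_mul_of_nonneg_right hk (S_nonneg hα0 n h0)
    -- second piece : substitution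
    have hB : (∫ u in t..(t+s), (t+s-u) ^ (α-1) * S α n u)
        = ∫ v in (0:ℝ)..s, (s-v) ^ (α-1) * S α n (t+v) := by
      have h3 := intervalIntegral.integral_comp_add_left
        (a := (0:ℝ)) (b := s) (f := fun u => (t+s-u) ^ (α-1) * S α n u) t
      rw [add_zero] at h3
      rw [← h3]
      apply intervalIntegral.integral_congr
      intro v _
      simp only
      rw [show t + s - (t+v) = s - v by ring]
    -- bound the substituted piece
    have hC : (∫ v in (0:ℝ)..s, (s-v) ^ (α-1) * S α n (t+v))
        ≤ ∫ v in (0:ℝ)..s, F α t * ((s-v) ^ (α-1) * F α v) := by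
      apply intervalIntegral.integral_mono_on hs.le hint2'
        ((intervalIntegrable_kernel_F hα0 hα1 hs).const_mul (F α t))
      intro v hv
      have hv0 : (0:ℝ) ≤ v := hv.1
      have hker : (0:ℝ) ≤ (s-v) ^ (α-1) := Real.rpow_nonneg (by linarith [hv.2]) _
      have hSle : S α n (t+v) ≤ F α t * F α v := by
        rcases eq_or_lt_of_le hv0 with h | h
        · rw [← h, add_zero]
          calc S α n t ≤ F α t := S_le_F hα0 n ht.le
            _ = F α t * 1 := by ring
            _ ≤ F α t * F α 0 := by
                have h1 := one_le_F hα0 (t := (0:ℝ)) le_rfl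
                have h2 := F_nonneg hα0 ht.le
                gcongr
        · exact ih t v ht h
      calc (s-v) ^ (α-1) * S α n (t+v) ≤ (s-v) ^ (α-1) * (F α t * F α v) :=
            mul_le_mul_of_nonneg_left hSle hker
        _ = F α t * ((s-v) ^ (α-1) * F α v) := by ring
    have hD : (∫ v in (0:ℝ)..s, F α t * ((s-v) ^ (α-1) * F α v))
        = F α t * ∫ v in (0:ℝ)..s, (s-v) ^ (α-1) * F α v :=
      intervalIntegral.integral_const_mul _ _
    have hE : F α t * (∫ v in (0:ℝ)..s, (s-v) ^ (α-1) * F α v)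
        ≤ F α t * (Real.Gamma α * (F α s - 1)) :=
      mul_le_mul_of_nonneg_left (integral_F_le hα0 hα1 hs) (F_nonneg hα0 ht.le)
    -- recursion at t
    have hrec_t := S_rec hα0 hα1 ht n
    have hSt : S α (n+1) t ≤ F α t := S_le_F hα0 (n+1) ht.le
    -- put everything together
    have hBC : (∫ u in t..(t+s), (t+s-u) ^ (α-1) * S α n u)
        ≤ F α t * (Real.Gamma α * (F α s - 1)) := by
      rw [hB]
      exact hC.trans (hD.le.trans hE)
    have hsum : (∫ u in (0:ℝ)..t, (t+s-u) ^ (α-1) * S α n u)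
          + (∫ u in t..(t+s), (t+s-u) ^ (α-1) * S α n u)
        ≤ (∫ u in (0:ℝ)..t, (t-u) ^ (α-1) * S α n u)
          + F α t * (Real.Gamma α * (F α s - 1)) := by linarith
    have hmul := mul_le_mul_of_nonneg_left hsum (inv_nonneg.mpr hΓα.le)
    have hexp : (Real.Gamma α)⁻¹ * ((∫ u in (0:ℝ)..t, (t-u) ^ (α-1) * S α n u)
          + F α t * (Real.Gamma α * (F α s - 1)))
        = (Real.Gamma α)⁻¹ * (∫ u in (0:ℝ)..t, (t-u) ^ (α-1) * S α n u)
          + F α t * (F α s - 1) := by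
      field_simp
    have hfin : 1 + (Real.Gamma α)⁻¹ * (∫ u in (0:ℝ)..t, (t-u) ^ (α-1) * S α n u)
        ≤ F α t := by rw [← hrec_t]; exact hSt
    have hlast : F α t + F α t * (F α s - 1) = F α t * F α s := by ring
    linarith [hmul, hexp, hfin]

lemma F_submul (hα0 : 0 < α) (hα1 : α < 1) {t s : ℝ} (ht : 0 < t) (hs : 0 < s) :
    F α (t + s) ≤ F α t * F α s := by
  refine le_of_tendsto (S_tendsto hα0 (t := t + s) (by positivity)) (Eventually.of_forall fun n => ?_)
  exact S_le_mul hα0 hα1 n t s ht hs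

lemma ML_zero (hα0 : 0 < α) : mittagLeffler α 0 = 1 := by
  unfold mittagLeffler
  rw [tsum_eq_single 0]
  · simp [Real.Gamma_one]
  · intro k hk
    simp [zero_pow hk]

end MLAux

theorem mittagLeffler_subadd (α x y : ℝ) (hα0 : 0 < α) (hα1 : α < 1)
    (hx : 0 ≤ x) (hy : 0 ≤ y) :
    mittagLeffler α ((x + y) ^ α) ≤ mittagLeffler α (x ^ α) * mittagLeffler α (y ^ α) := by
  rcases eq_or_lt_of_le hx with hx0 | hx0
  · rw [← hx0, zero_add, Real.zero_rpow hα0.ne', MLAux.ML_zero hα0, one_mul]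
  rcases eq_or_lt_of_le hy with hy0 | hy0
  · rw [← hy0, add_zero, Real.zero_rpow hα0.ne', MLAux.ML_zero hα0, mul_one]
  exact MLAux.F_submul hα0 hα1 hx0 hy0
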